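/- For every integer n ≥ 2, with α = 3·⌈log n⌉, the following inequality holds in the real numbers: Σ_{k=1}^{n} C(n, k) · C(n, k−1) · ((k−1)/n)^{kα} ≤ 2 · Σ_{k=1}^{⌈n/2⌉} (e·n/k)^{2k} · exp(−((n−k+1)/n) · k · α). -/

import Mathlib

open Finset

private lemma pow_self_le_factorial_mul_exp (k : ℕ) :
    (k : ℝ) ^ k ≤ (k.factorial : ℝ) * Real.exp k := by
  have h := Real.sum_le_exp_of_nonneg (x := (k : ℝ)) (by positivity) (k + 1)
  have hterm : (k : ℝ) ^ k / (k.factorial : ℝ) ≤ Real.exp k := by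
    refine le_trans ?_ h
    have hs := Finset.single_le_sum (f := fun i => (k : ℝ) ^ i / (i.factorial : ℝ))
      (fun i _ => by positivity) (Finset.self_mem_range_succ k)
    simpa using hs
  have hk : (0 : ℝ) < (k.factorial : ℝ) := by positivity
  calc (k : ℝ) ^ k = (k : ℝ) ^ k / (k.factorial : ℝ) * (k.factorial : ℝ) := by field_simp
    _ ≤ Real.exp k * (k.factorial : ℝ) := by
        exact mul_le_mul_of_nonneg_right hterm hk.le
    _ = (k.factorial : ℝ) * Real.exp k := mul_comm _ _

private lemma choose_le_pow_real (n k : ℕ) (hk : 1 ≤ k) :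
    (n.choose k : ℝ) ≤ (Real.exp 1 * n / k) ^ k := by
  have hkR : (0 : ℝ) < (k : ℝ) := by exact_mod_cast hk
  have hfac : (0 : ℝ) < (k.factorial : ℝ) := by positivity
  have h1 : (n.choose k : ℝ) ≤ (n : ℝ) ^ k / (k.factorial : ℝ) := by
    rw [le_div_iff₀ hfac]
    have hd : n.choose k * k.factorial ≤ n ^ k := by
      have hdd := Nat.descFactorial_le_pow n k
      rwa [Nat.descFactorial_eq_factorial_mul_choose, mul_comm] at hdd
    exact_mod_cast hd
  refine h1.trans ?_
  have h2 : (Real.exp 1 * n / k) ^ k = (Real.exp 1 * n) ^ k / (k : ℝ) ^ k :=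
    div_pow _ _ k
  rw [h2, div_le_div_iff₀ hfac (by positivity)]
  have h3 : (k : ℝ) ^ k ≤ (k.factorial : ℝ) * Real.exp k := pow_self_le_factorial_mul_exp k
  have h4 : (Real.exp 1 * n) ^ k = Real.exp k * (n : ℝ) ^ k := by
    rw [mul_pow, ← Real.exp_nat_mul, mul_one]
  calc (n : ℝ) ^ k * (k : ℝ) ^ k ≤ (n : ℝ) ^ k * ((k.factorial : ℝ) * Real.exp k) := by
        exact mul_le_mul_of_nonneg_left h3 (by positivity)
    _ = (Real.exp 1 * n) ^ k * (k.factorial : ℝ) := by rw [h4]; ring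

private lemma ratio_pow_le_exp (n k m : ℕ) (hn : 1 ≤ n) (hk : 1 ≤ k) :
    (((k - 1 : ℕ) : ℝ) / (n : ℝ)) ^ m
      ≤ Real.exp (-(((n : ℝ) - (k : ℝ) + 1) / (n : ℝ)) * (m : ℝ)) := by
  have hnR : (0 : ℝ) < (n : ℝ) := by exact_mod_cast hn
  have hk1 : ((k - 1 : ℕ) : ℝ) = (k : ℝ) - 1 := by
    rw [Nat.cast_sub hk, Nat.cast_one]
  have hx0 : 0 ≤ ((k - 1 : ℕ) : ℝ) / (n : ℝ) := by positivity
  have hxe : ((k - 1 : ℕ) : ℝ) / (n : ℝ)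
      ≤ Real.exp (((k - 1 : ℕ) : ℝ) / (n : ℝ) - 1) := by
    have := Real.add_one_le_exp (((k - 1 : ℕ) : ℝ) / (n : ℝ) - 1)
    linarith
  have h1 : (((k - 1 : ℕ) : ℝ) / (n : ℝ)) ^ m
      ≤ Real.exp (((k - 1 : ℕ) : ℝ) / (n : ℝ) - 1) ^ m :=
    pow_le_pow_left₀ hx0 hxe m
  have h2 : Real.exp (((k - 1 : ℕ) : ℝ) / (n : ℝ) - 1) ^ m
      = Real.exp ((((k - 1 : ℕ) : ℝ) / (n : ℝ) - 1) * m) := by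
    rw [← Real.exp_nat_mul, mul_comm]
  rw [h2] at h1
  refine h1.trans_eq ?_
  congr 1
  rw [hk1, div_sub_one hnR.ne']
  ring

/-- For every integer `n ≥ 2`, with `a = 3⌈log n⌉`,
`∑_{k=1}^{n} C(n,k) C(n,k-1) ((k-1)/n)^{k a}
  ≤ 2 ∑_{k=1}^{⌈n/2⌉} (e n / k)^{2k} exp(-((n-k+1)/n) k a)`. -/
theorem qn_le_exponential_sum (n : ℕ) (hn : 2 ≤ n) :
    ∑ k ∈ Finset.Icc 1 n, (n.choose k : ℝ) * (n.choose (k - 1) : ℝ) *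
        (((k - 1 : ℕ) : ℝ) / (n : ℝ)) ^ (k * (3 * ⌈Real.log n⌉₊)) ≤
      2 * ∑ k ∈ Finset.Icc 1 ((n + 1) / 2),
        (Real.exp 1 * (n : ℝ) / (k : ℝ)) ^ (2 * k) *
          Real.exp (-(((n : ℝ) - (k : ℝ) + 1) / (n : ℝ)) * (k : ℝ) *
            ((3 * ⌈Real.log n⌉₊ : ℕ) : ℝ)) := by
  set a : ℕ := 3 * ⌈Real.log n⌉₊ with ha
  set m : ℕ := (n + 1) / 2 with hm
  set f : ℕ → ℝ := fun k =>
    (Real.exp 1 * (n : ℝ) / (k : ℝ)) ^ (2 * k) *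
      Real.exp (-(((n : ℝ) - (k : ℝ) + 1) / (n : ℝ)) * (k : ℝ) * ((a : ℕ) : ℝ)) with hf
  set T : ℕ → ℝ := fun k => (n.choose k : ℝ) * (n.choose (k - 1) : ℝ) *
      (((k - 1 : ℕ) : ℝ) / (n : ℝ)) ^ (k * a) with hT
  have hn1 : 1 ≤ n := by omega
  have hf0 : ∀ k, 0 ≤ f k := by
    intro k
    apply mul_nonneg (pow_nonneg (by positivity) _) (Real.exp_nonneg _)
  -- main pointwise bound
  have key : ∀ k : ℕ, 1 ≤ k → k ≤ n → ∀ j : ℕ, 1 ≤ j → 2 * j ≤ n + 1 →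
      (j = k ∨ j = n + 1 - k) → (n.choose (k - 1) : ℝ) ≤ (n.choose j : ℝ) →
      (n.choose k : ℝ) ≤ (Real.exp 1 * n / j) ^ j → T k ≤ f j := by
    intro k hk1 hkn j hj1 hj2 hjk hB hA
    have hjn : j ≤ n := by omega
    have hBj : (n.choose j : ℝ) ≤ (Real.exp 1 * n / j) ^ j := choose_le_pow_real n j hj1
    have hchoose : (n.choose k : ℝ) * (n.choose (k - 1) : ℝ)
        ≤ (Real.exp 1 * n / j) ^ (2 * j) := by
      have : (n.choose k : ℝ) * (n.choose (k - 1) : ℝ)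
          ≤ (Real.exp 1 * n / j) ^ j * (Real.exp 1 * n / j) ^ j := by
        exact mul_le_mul hA (hB.trans hBj) (by positivity) (by positivity)
      calc (n.choose k : ℝ) * (n.choose (k - 1) : ℝ)
          ≤ (Real.exp 1 * n / j) ^ j * (Real.exp 1 * n / j) ^ j := this
        _ = (Real.exp 1 * n / j) ^ (2 * j) := by rw [← pow_add]; ring_nf
    have hexp : (((k - 1 : ℕ) : ℝ) / (n : ℝ)) ^ (k * a)
        ≤ Real.exp (-(((n : ℝ) - (j : ℝ) + 1) / (n : ℝ)) * (j : ℝ) * ((a : ℕ) : ℝ)) := by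
      refine (ratio_pow_le_exp n k (k * a) hn1 hk1).trans_eq ?_
      congr 1
      have hjr : (j : ℝ) = (n : ℝ) + 1 - (k : ℝ) ∨ (j : ℝ) = (k : ℝ) := by
        rcases hjk with h | h
        · right; exact_mod_cast congrArg (Nat.cast : ℕ → ℝ) h
        · left
          have hjk' : j + k = n + 1 := by omega
          have := congrArg (Nat.cast : ℕ → ℝ) hjk'
          push_cast at this; linarith
      push_cast
      rcases hjr with h | h <;> rw [h] <;> ring
    calc T k = (n.choose k : ℝ) * (n.choose (k - 1) : ℝ) *
            (((k - 1 : ℕ) : ℝ) / (n : ℝ)) ^ (k * a) := rfl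
      _ ≤ (Real.exp 1 * n / j) ^ (2 * j) *
            Real.exp (-(((n : ℝ) - (j : ℝ) + 1) / (n : ℝ)) * (j : ℝ) * ((a : ℕ) : ℝ)) := by
          exact mul_le_mul hchoose hexp (by positivity) (by positivity)
      _ = f j := rfl
  have key₁ : ∀ k ∈ Finset.Icc 1 m, T k ≤ f k := by
    intro k hk
    simp only [Finset.mem_Icc] at hk
    obtain ⟨hk1, hkm⟩ := hk
    have hkn : k ≤ n := by omega
    have h2k : 2 * k ≤ n + 1 := by omega
    refine key k hk1 hkn k hk1 h2k (Or.inl rfl) ?_ (choose_le_pow_real n k hk1)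
    -- choose n (k-1) ≤ choose n k
    rcases Nat.lt_or_ge (2 * k) (n + 1) with h | h
    · have hlt : k - 1 < n / 2 := by omega
      have hmono := Nat.choose_le_succ_of_lt_half_left (n := n) hlt
      have hkk : k - 1 + 1 = k := by omega
      rw [hkk] at hmono
      exact_mod_cast hmono
    · have h2k' : 2 * k = n + 1 := by omega
      have hsym : n.choose (n - k) = n.choose k := Nat.choose_symm hkn
      have : k - 1 = n - k := by omega
      rw [this, hsym]
  have key₂ : ∀ k ∈ Finset.Icc (m + 1) n, T k ≤ f (n + 1 - k) := by
    intro k hk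
    simp only [Finset.mem_Icc] at hk
    obtain ⟨hkm, hkn⟩ := hk
    set j : ℕ := n + 1 - k with hj
    have hk1 : 1 ≤ k := by omega
    have hj1 : 1 ≤ j := by omega
    have h2j : 2 * j ≤ n + 1 := by omega
    refine key k hk1 hkn j hj1 h2j (Or.inr rfl) ?_ ?_
    · -- choose n (k-1) ≤ choose n j
      have : n - (k - 1) = j := by omega
      have hsym : n.choose (n - (k - 1)) = n.choose (k - 1) :=
        Nat.choose_symm (by omega)
      rw [this] at hsym
      rw [← hsym]
    · -- choose n k = choose n (j-1) ≤ choose n j ≤ (en/j)^j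
      have h1 : n - k = j - 1 := by omega
      have hsym : n.choose (n - k) = n.choose k := Nat.choose_symm hkn
      rw [h1] at hsym
      have hlt : j - 1 < n / 2 := by omega
      have hmono := Nat.choose_le_succ_of_lt_half_left (n := n) hlt
      have hjj : j - 1 + 1 = j := by omega
      rw [hjj] at hmono
      have : (n.choose k : ℝ) ≤ (n.choose j : ℝ) := by
        rw [← hsym]; exact_mod_cast hmono
      exact this.trans (choose_le_pow_real n j hj1)
  -- split the sum
  have hsplit : ∑ k ∈ Finset.Icc 1 n, T k
      = (∑ k ∈ Finset.Icc 1 m, T k) + ∑ k ∈ Finset.Icc (m + 1) n, T k := by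
    rw [show Finset.Icc 1 n = Finset.Ioc 0 n from Finset.Icc_add_one_left_eq_Ioc 0 n,
      show Finset.Icc 1 m = Finset.Ioc 0 m from Finset.Icc_add_one_left_eq_Ioc 0 m,
      show Finset.Icc (m + 1) n = Finset.Ioc m n from Finset.Icc_add_one_left_eq_Ioc m n]
    exact (Finset.sum_Ioc_consecutive _ (by omega) (by omega)).symm
  have hre : ∑ k ∈ Finset.Icc (m + 1) n, f (n + 1 - k)
      = ∑ k ∈ Finset.Icc 1 (n - m), f k := by
    refine Finset.sum_nbij' (fun k => n + 1 - k) (fun k => n + 1 - k) ?_ ?_ ?_ ?_ ?_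
    · intro x hx; simp only [Finset.mem_Icc] at *; omega
    · intro x hx; simp only [Finset.mem_Icc] at *; omega
    · intro x hx; simp only [Finset.mem_Icc] at hx
      show n + 1 - (n + 1 - x) = x; omega
    · intro x hx; simp only [Finset.mem_Icc] at hx
      show n + 1 - (n + 1 - x) = x; omega
    · intro x hx; rfl
  have hsub : ∑ k ∈ Finset.Icc 1 (n - m), f k ≤ ∑ k ∈ Finset.Icc 1 m, f k := by
    refine Finset.sum_le_sum_of_subset_of_nonneg ?_ (fun i _ _ => hf0 i)
    intro x hx; simp only [Finset.mem_Icc] at *; omega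
  calc ∑ k ∈ Finset.Icc 1 n, T k
      = (∑ k ∈ Finset.Icc 1 m, T k) + ∑ k ∈ Finset.Icc (m + 1) n, T k := hsplit
    _ ≤ (∑ k ∈ Finset.Icc 1 m, f k) + ∑ k ∈ Finset.Icc (m + 1) n, f (n + 1 - k) := by
        exact add_le_add (Finset.sum_le_sum key₁) (Finset.sum_le_sum key₂)
    _ = (∑ k ∈ Finset.Icc 1 m, f k) + ∑ k ∈ Finset.Icc 1 (n - m), f k := by rw [hre]
    _ ≤ (∑ k ∈ Finset.Icc 1 m, f k) + ∑ k ∈ Finset.Icc 1 m, f k := by linarith [hsub]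
    _ = 2 * ∑ k ∈ Finset.Icc 1 m, f k := by ring
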